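/- A permutation γ ∈ S_n is join-irreducible in the right weak order if and only if there exist i ∈ [n−1] such that γ_i > γ_{i+1} and γ_j < γ_{j+1} for all j ∈ [n−1] with j ≠ i. Moreover, the map sending such γ to the set A = {γ_{i+1}, …, γ_n} is a bijection between join-irreducibles of S_n and nonempty proper subsets A ⊆ [n] with max([n]−A) > min(A). -/

import Mathlib

/-- The (left) inversion set of a permutation `w ∈ S_n`: pairs `(b, a)` of values
with `b < a` appearing in the order `a … b` in the one-line notation of `w`. -/
def invSet {n : ℕ} (w : Equiv.Perm (Fin n)) : Set (Fin n × Fin n) :=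
  {p | p.1 < p.2 ∧ w⁻¹ p.2 < w⁻¹ p.1}

/-- The right weak order on `S_n`: containment of inversion sets. -/
def weakLE {n : ℕ} (u w : Equiv.Perm (Fin n)) : Prop := invSet u ⊆ invSet w

/-- Cover relation of the right weak order on `S_n`. -/
def weakCov {n : ℕ} (u w : Equiv.Perm (Fin n)) : Prop :=
  weakLE u w ∧ u ≠ w ∧ ∀ v, weakLE u v → weakLE v w → v = u ∨ v = w

/-- Join-irreducible: covers exactly one element. -/
def JoinIrr {n : ℕ} (γ : Equiv.Perm (Fin n)) : Prop := ∃! u, weakCov u γ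

/-- `γ` has a descent at position `i` (i.e. `γ_i > γ_{i+1}`). -/
def IsDescent {n : ℕ} (γ : Equiv.Perm (Fin n)) (i : Fin n) : Prop :=
  ∃ h : (i : ℕ) + 1 < n, γ ⟨(i : ℕ) + 1, h⟩ < γ i

/-- `A` is a nonempty proper subset of `[n]` with `max(Aᶜ) > min(A)`. -/
def GoodSet {n : ℕ} (A : Finset (Fin n)) : Prop :=
  A.Nonempty ∧ A ≠ Finset.univ ∧ ∃ a ∈ A, ∃ b ∈ Aᶜ, a < b

theorem invSet_inj {n : ℕ} {u w : Equiv.Perm (Fin n)} (h : invSet u = invSet w) : u = w := by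
  have key : ∀ p q : Fin n, p < q → w⁻¹ (u p) < w⁻¹ (u q) := by
    intro p q hpq
    have hne : u p ≠ u q := fun e => absurd (u.injective e) hpq.ne
    rcases lt_or_gt_of_ne hne with hab | hab
    · -- u p < u q : (u p, u q) ∉ invSet u
      have h1 : (u p, u q) ∉ invSet u := by
        intro ⟨_, h2⟩
        simp only [Equiv.Perm.inv_def, Equiv.symm_apply_apply] at h2
        exact absurd hpq (not_lt.2 h2.le)
      rw [h] at h1
      have : ¬ (w⁻¹ (u q) < w⁻¹ (u p)) := fun hc => h1 ⟨hab, hc⟩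
      rcases (not_lt.1 this).lt_or_eq with h2 | h2
      · exact h2
      · exact absurd (w⁻¹.injective h2) hne
    · have h1 : (u q, u p) ∈ invSet u := by
        refine ⟨hab, ?_⟩
        simpa using hpq
      rw [h] at h1
      exact h1.2
  have hsm : StrictMono (fun p => w⁻¹ (u p)) := fun p q hpq => key p q hpq
  have hid : StrictMono (id : Fin n → Fin n) := strictMono_id
  have hcard : (Finset.univ : Finset (Fin n)).card = n := by simp
  have e1 := Finset.orderEmbOfFin_unique hcard (fun x => Finset.mem_univ _) hsm
  have e2 := Finset.orderEmbOfFin_unique hcard (fun x => Finset.mem_univ _) hid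
  have : (fun p => w⁻¹ (u p)) = id := e1.trans e2.symm
  apply Equiv.ext
  intro x
  have hx := congrFun this x
  simp only [id] at hx
  have : w (w⁻¹ (u x)) = w x := by rw [hx]
  simpa using this

theorem invSet_swap {n : ℕ} (γ : Equiv.Perm (Fin n)) (i : Fin n) (h : (i:ℕ)+1 < n)
    (hd : γ ⟨(i:ℕ)+1, h⟩ < γ i) :
    invSet (γ * Equiv.swap i ⟨(i:ℕ)+1, h⟩) = invSet γ \ {(γ ⟨(i:ℕ)+1, h⟩, γ i)} := by
  set i' : Fin n := ⟨(i:ℕ)+1, h⟩ with hi'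
  have hii' : i ≠ i' := by simp [Fin.ext_iff, hi']
  set s := Equiv.swap i i' with hs
  have hinv : ∀ x, (γ * s)⁻¹ x = s (γ⁻¹ x) := by
    intro x
    simp [mul_inv_rev, hs, Equiv.swap_inv, Equiv.Perm.mul_apply]
  have swap_lt : ∀ p q : Fin n, p ≠ q → ¬(p = i' ∧ q = i) →
      (s p < s q ↔ (p < q ∧ ¬(q = i' ∧ p = i))) := by
    intro p q hpq hpq2
    have hv : (i' : ℕ) = (i : ℕ) + 1 := rfl
    rw [hs, Equiv.swap_apply_def, Equiv.swap_apply_def]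
    split_ifs <;>
      simp only [Fin.lt_def, Fin.ext_iff, hv, not_and, ne_eq] at * <;> omega
  ext ⟨b, a⟩
  simp only [invSet, Set.mem_setOf_eq, Set.mem_diff, Set.mem_singleton_iff, Prod.mk.injEq,
    hinv]
  constructor
  · rintro ⟨hba, hlt⟩
    have hpq : γ⁻¹ a ≠ γ⁻¹ b := fun e => absurd (γ⁻¹.injective e) hba.ne'
    have hno : ¬(γ⁻¹ a = i' ∧ γ⁻¹ b = i) := by
      rintro ⟨e1, e2⟩
      have : a = γ i' := by rw [← e1]; simp
      have hb : b = γ i := by rw [← e2]; simp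
      rw [this, hb] at hba
      exact absurd hba (asymm hd)
    have := (swap_lt _ _ hpq hno).1 hlt
    refine ⟨⟨hba, this.1⟩, ?_⟩
    rintro ⟨e1, e2⟩
    exact this.2 ⟨by rw [e1]; simp, by rw [e2]; simp⟩
  · rintro ⟨⟨hba, hlt⟩, hne⟩
    have hpq : γ⁻¹ a ≠ γ⁻¹ b := fun e => absurd (γ⁻¹.injective e) hba.ne'
    have hno : ¬(γ⁻¹ a = i' ∧ γ⁻¹ b = i) := by
      rintro ⟨e1, e2⟩
      have ha : a = γ i' := by rw [← e1]; simp
      have hb : b = γ i := by rw [← e2]; simp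
      rw [ha, hb] at hba
      exact absurd hba (asymm hd)
    refine ⟨hba, (swap_lt _ _ hpq hno).2 ⟨hlt, ?_⟩⟩
    rintro ⟨e1, e2⟩
    have hb : b = γ i' := by rw [← e1]; simp
    have ha : a = γ i := by rw [← e2]; simp
    exact hne ⟨hb, ha⟩

theorem cov_of_descent {n : ℕ} (γ : Equiv.Perm (Fin n)) (i : Fin n) (h : (i:ℕ)+1 < n)
    (hd : γ ⟨(i:ℕ)+1, h⟩ < γ i) :
    weakCov (γ * Equiv.swap i ⟨(i:ℕ)+1, h⟩) γ := by
  set i' : Fin n := ⟨(i:ℕ)+1, h⟩ with hi'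
  set pr : Fin n × Fin n := (γ i', γ i) with hpr
  have hswap := invSet_swap γ i h hd
  have hprmem : pr ∈ invSet γ := by
    refine ⟨hd, ?_⟩
    simp only [hpr, Equiv.Perm.inv_def, Equiv.symm_apply_apply]
    simp [Fin.lt_def, hi']
  have hprnot : pr ∉ invSet (γ * Equiv.swap i i') := by
    rw [hswap]; exact fun ⟨_, h2⟩ => h2 rfl
  refine ⟨?_, ?_, ?_⟩
  · rw [weakLE, hswap]; exact Set.diff_subset
  · intro e; rw [e] at hprnot; exact hprnot hprmem
  · intro v h1 h2
    by_cases hv : pr ∈ invSet v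
    · right
      apply invSet_inj
      apply Set.Subset.antisymm h2
      intro x hx
      rcases eq_or_ne x pr with rfl | hne
      · exact hv
      · exact h1 (by rw [hswap]; exact ⟨hx, hne⟩)
    · left
      apply invSet_inj
      apply Set.Subset.antisymm
      · intro x hx
        rw [hswap]
        refine ⟨h2 hx, fun e => hv ?_⟩
        rw [Set.mem_singleton_iff] at e
        rw [hpr, ← e]
        exact hx
      · exact h1

theorem descent_of_cov {n : ℕ} {γ u : Equiv.Perm (Fin n)} (hc : weakCov u γ) :
    ∃ (i : Fin n) (h : (i:ℕ)+1 < n), γ ⟨(i:ℕ)+1, h⟩ < γ i ∧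
      u = γ * Equiv.swap i ⟨(i:ℕ)+1, h⟩ := by
  classical
  obtain ⟨hle, hne, hmid⟩ := hc
  have hssub : invSet u ≠ invSet γ := fun e => hne (invSet_inj e)
  have hex : ∃ x, x ∈ invSet γ ∧ x ∉ invSet u := by
    by_contra hcon; push_neg at hcon
    exact hssub (Set.Subset.antisymm hle hcon)
  -- the finset of inversions of γ not in u
  set T : Finset (Fin n × Fin n) :=
    Finset.univ.filter (fun x => x ∈ invSet γ ∧ x ∉ invSet u) with hT
  have hTne : T.Nonempty := by
    obtain ⟨x, hx1, hx2⟩ := hex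
    exact ⟨x, by simp [hT, hx1, hx2]⟩
  obtain ⟨x, hxT, hxmin⟩ := T.exists_min_image
    (fun y => ((γ⁻¹ y.1 : Fin n) : ℕ) - ((γ⁻¹ y.2 : Fin n) : ℕ)) hTne
  obtain ⟨hxγ, hxu⟩ : x ∈ invSet γ ∧ x ∉ invSet u := by
    simpa [hT] using hxT
  obtain ⟨b, a⟩ := x
  obtain ⟨hba, hpos⟩ := hxγ
  simp only at hba hpos hxu hxmin ⊢
  set p : Fin n := γ⁻¹ a with hp
  set q : Fin n := γ⁻¹ b with hq
  -- u⁻¹ b < u⁻¹ a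
  have hune : u⁻¹ b ≠ u⁻¹ a := fun e => absurd (u⁻¹.injective e) hba.ne
  have huba : u⁻¹ b < u⁻¹ a := by
    rcases lt_or_ge (u⁻¹ b) (u⁻¹ a) with h1 | h1
    · exact h1
    · exact absurd (lt_of_le_of_ne h1 hune.symm) (fun hc => hxu ⟨hba, hc⟩)
  -- q = p + 1
  have hqp1 : (q:ℕ) = (p:ℕ) + 1 := by
    by_contra hcon
    have hpq : (p:ℕ) < (q:ℕ) := hpos
    have hm : (p:ℕ) + 1 < (q:ℕ) := by omega
    have hmn : (p:ℕ) + 1 < n := lt_trans hm q.isLt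
    set m : Fin n := ⟨(p:ℕ)+1, hmn⟩ with hmdef
    set c : Fin n := γ m with hc
    have hγp : γ p = a := by simp [hp]
    have hγq : γ q = b := by simp [hq]
    have hginvc : γ⁻¹ c = m := by simp [hc]
    have hca : c ≠ a := fun e => by
      have h0 : γ m = γ p := by rw [hγp, ← hc]; exact e
      have h1 := congrArg Fin.val (γ.injective h0)
      rw [hmdef] at h1
      simp at h1
    have hcb : c ≠ b := fun e => by
      have h0 : γ m = γ q := by rw [hγq, ← hc]; exact e
      have h1 := congrArg Fin.val (γ.injective h0)
      rw [hmdef] at h1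
      simp only [] at h1
      omega
    -- helper: a smaller pair in invSet γ must be in invSet u
    have hsmall : ∀ y : Fin n × Fin n, y ∈ invSet γ →
        ((γ⁻¹ y.1 : Fin n) : ℕ) - ((γ⁻¹ y.2 : Fin n) : ℕ) < (q:ℕ) - (p:ℕ) →
        y ∈ invSet u := by
      intro y hyγ hylt
      by_contra hyu
      have hyT : y ∈ T := by simp [hT, hyγ, hyu]
      have := hxmin y hyT
      omega
    rcases lt_trichotomy c a with hlt1 | heq1 | hgt1
    · rcases lt_trichotomy c b with hlt2 | heq2 | hgt2
      · -- c < b : pairs (c,a) and (c,b)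
        have h1 : (c, a) ∈ invSet γ := ⟨lt_trans hlt2 hba, by
          simp only [hginvc, hγp ▸ (by simp [hp] : γ⁻¹ a = p)]
          simp [hmdef, Fin.lt_def]
          exact le_rfl⟩
        have h2 := hsmall (c, a) h1 (by
          simp only []
          rw [hginvc]
          have : ((γ⁻¹ a : Fin n) : ℕ) = (p:ℕ) := rfl
          rw [this, hmdef]
          simp; omega)
        -- (c,b) ∉ invSet u
        have h3 : (c, b) ∉ invSet u := fun hmem => by
          have := hle hmem
          obtain ⟨_, h4⟩ := this
          rw [hginvc] at h4
          have : ((γ⁻¹ b : Fin n) : ℕ) = (q:ℕ) := rfl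
          rw [Fin.lt_def] at h4
          simp only [this, hmdef] at h4
          omega
        have h4 : ¬ (u⁻¹ b < u⁻¹ c) := fun hc2 => h3 ⟨hlt2, hc2⟩
        have h5 : u⁻¹ a < u⁻¹ c := h2.2
        rw [not_lt] at h4
        exact absurd (lt_of_lt_of_le h5 h4) (not_lt.2 huba.le)
      · exact absurd heq2 hcb
      · -- b < c < a
        have h1 : (b, c) ∈ invSet γ := ⟨hgt2, by
          rw [hginvc]
          have : ((γ⁻¹ b : Fin n) : ℕ) = (q:ℕ) := rfl
          rw [Fin.lt_def]; simp only [this, hmdef]; omega⟩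
        have h2 := hsmall (b, c) h1 (by
          simp only []
          rw [hginvc]
          have : ((γ⁻¹ b : Fin n) : ℕ) = (q:ℕ) := rfl
          rw [this, hmdef]; simp; omega)
        have h3 : (c, a) ∈ invSet γ := ⟨hlt1, by
          rw [hginvc]
          have : ((γ⁻¹ a : Fin n) : ℕ) = (p:ℕ) := rfl
          rw [Fin.lt_def]; simp only [this, hmdef]; omega⟩
        have h4 := hsmall (c, a) h3 (by
          simp only []
          rw [hginvc]
          have : ((γ⁻¹ a : Fin n) : ℕ) = (p:ℕ) := rfl
          rw [this, hmdef]; simp; omega)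
        -- u⁻¹ c < u⁻¹ b and u⁻¹ a < u⁻¹ c
        exact absurd (lt_trans h4.2 h2.2) (not_lt.2 huba.le)
    · exact absurd heq1 hca
    · -- a < c : pairs (b,c) and (a,c)
      have h1 : (b, c) ∈ invSet γ := ⟨lt_trans hba hgt1, by
        rw [hginvc]
        have : ((γ⁻¹ b : Fin n) : ℕ) = (q:ℕ) := rfl
        rw [Fin.lt_def]; simp only [this, hmdef]; omega⟩
      have h2 := hsmall (b, c) h1 (by
        simp only []
        rw [hginvc]
        have : ((γ⁻¹ b : Fin n) : ℕ) = (q:ℕ) := rfl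
        rw [this, hmdef]; simp; omega)
      have h3 : (a, c) ∉ invSet u := fun hmem => by
        have := hle hmem
        obtain ⟨_, h4⟩ := this
        rw [hginvc] at h4
        have : ((γ⁻¹ a : Fin n) : ℕ) = (p:ℕ) := rfl
        rw [Fin.lt_def] at h4
        simp only [this, hmdef] at h4
        omega
      have h4 : ¬ (u⁻¹ c < u⁻¹ a) := fun hc2 => h3 ⟨hgt1, hc2⟩
      rw [not_lt] at h4
      exact absurd (lt_of_le_of_lt h4 h2.2) (not_lt.2 huba.le)
  -- now q = p+1 : descent at p
  have hp1n : (p:ℕ) + 1 < n := hqp1 ▸ q.isLt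
  refine ⟨p, hp1n, ?_, ?_⟩
  · have : γ ⟨(p:ℕ)+1, hp1n⟩ = b := by
      have : (⟨(p:ℕ)+1, hp1n⟩ : Fin n) = q := by simp [Fin.ext_iff, hqp1]
      rw [this, hq]; simp
    rw [this]
    have hγp : γ p = a := by simp [hp]
    rw [hγp]; exact hba
  · -- u = γ * swap
    have hd : γ ⟨(p:ℕ)+1, hp1n⟩ < γ p := by
      have e1 : γ ⟨(p:ℕ)+1, hp1n⟩ = b := by
        have : (⟨(p:ℕ)+1, hp1n⟩ : Fin n) = q := by simp [Fin.ext_iff, hqp1]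
        rw [this, hq]; simp
      have e2 : γ p = a := by simp [hp]
      rw [e1, e2]; exact hba
    have hswap := invSet_swap γ p hp1n hd
    have hu_le : weakLE u (γ * Equiv.swap p ⟨(p:ℕ)+1, hp1n⟩) := by
      intro y hy
      rw [hswap]
      refine ⟨hle hy, ?_⟩
      intro e
      have e1 : γ ⟨(p:ℕ)+1, hp1n⟩ = b := by
        have : (⟨(p:ℕ)+1, hp1n⟩ : Fin n) = q := by simp [Fin.ext_iff, hqp1]
        rw [this, hq]; simp
      have e2 : γ p = a := by simp [hp]
      rw [e, e1, e2] at hy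
      exact hxu hy
    have hs_le : weakLE (γ * Equiv.swap p ⟨(p:ℕ)+1, hp1n⟩) γ := by
      rw [weakLE, hswap]; exact Set.diff_subset
    rcases hmid _ hu_le hs_le with h1 | h1
    · exact h1.symm
    · exfalso
      have := congrArg (fun f : Equiv.Perm (Fin n) => f p) h1
      simp only [Equiv.Perm.mul_apply, Equiv.swap_apply_left] at this
      have := γ.injective this
      have := congrArg Fin.val this
      simp at this

theorem swap_inj {n : ℕ} {γ : Equiv.Perm (Fin n)} {i j : Fin n}
    (hi : (i:ℕ)+1 < n) (hj : (j:ℕ)+1 < n)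
    (he : γ * Equiv.swap i ⟨(i:ℕ)+1, hi⟩ = γ * Equiv.swap j ⟨(j:ℕ)+1, hj⟩) : i = j := by
  have hs : Equiv.swap i ⟨(i:ℕ)+1, hi⟩ = Equiv.swap j ⟨(j:ℕ)+1, hj⟩ := mul_left_cancel he
  have := congrArg (fun f : Equiv.Perm (Fin n) => f i) hs
  simp only [Equiv.swap_apply_left, Equiv.swap_apply_def] at this
  split_ifs at this with h1 h2
  · exact h1
  · -- i = ⟨j+1⟩ and result j = ⟨i+1⟩
    have e1 := congrArg Fin.val h2
    have e2 := congrArg Fin.val this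
    simp at e1 e2
    omega
  · have := congrArg Fin.val this
    simp at this

theorem joinIrr_iff {n : ℕ} (γ : Equiv.Perm (Fin n)) :
    JoinIrr γ ↔ ∃! i : Fin n, IsDescent γ i := by
  constructor
  · rintro ⟨u, hu, huniq⟩
    obtain ⟨i, h, hd, hueq⟩ := descent_of_cov hu
    refine ⟨i, ⟨h, hd⟩, ?_⟩
    rintro j ⟨hj, hdj⟩
    have hc := cov_of_descent γ j hj hdj
    have := huniq _ hc
    rw [hueq] at this
    exact swap_inj hj h this
  · rintro ⟨i, ⟨h, hd⟩, huniq⟩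
    refine ⟨γ * Equiv.swap i ⟨(i:ℕ)+1, h⟩, cov_of_descent γ i h hd, ?_⟩
    intro v hv
    obtain ⟨j, hj, hdj, rfl⟩ := descent_of_cov hv
    have hji : j = i := huniq j ⟨hj, hdj⟩
    subst hji
    rfl

theorem incr_of_not_descent {n : ℕ} (γ' : Equiv.Perm (Fin n)) {a b : ℕ} (ha : a < b) (hb : b < n)
    (hnd : ∀ (m : ℕ) (hm1 : m + 1 < n), a ≤ m → m + 1 ≤ b →
      ¬ (γ' ⟨m+1, hm1⟩ < γ' ⟨m, by omega⟩)) :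
    γ' ⟨a, by omega⟩ < γ' ⟨b, hb⟩ := by
  induction b with
  | zero => omega
  | succ b ih =>
    have hstep : ∀ (hbn : b < n) (hb1 : b + 1 < n), γ' ⟨b, hbn⟩ < γ' ⟨b+1, hb1⟩ := by
      intro hbn hb1
      have h1 := hnd b hb1 (by omega) le_rfl
      have h2 : γ' ⟨b, hbn⟩ ≠ γ' ⟨b+1, hb1⟩ := fun e => by
        have := congrArg Fin.val (γ'.injective e); simp at this
      exact lt_of_le_of_ne (not_lt.1 h1) h2
    rcases eq_or_lt_of_le (Nat.lt_succ_iff.1 ha) with rfl | hab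
    · exact hstep (by omega) hb
    · have ihh := ih hab (by omega) (fun m hm1 h1 h2 => hnd m hm1 h1 (by omega))
      exact lt_trans ihh (hstep (by omega) hb)

theorem part2 {n : ℕ} (γ : Equiv.Perm (Fin n)) (h : JoinIrr γ) :
    ∃ i : Fin n, IsDescent γ i ∧ GoodSet (Finset.image ⇑γ (Finset.Ioi i)) := by
  obtain ⟨i, hd, -⟩ := (joinIrr_iff γ).1 h
  obtain ⟨hi, hlt⟩ := hd
  have hii' : i < (⟨(i:ℕ)+1, hi⟩ : Fin n) := by rw [Fin.lt_def]; exact Nat.lt_succ_self _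
  have hnotmem : γ i ∉ Finset.image ⇑γ (Finset.Ioi i) := by
    intro hmem
    obtain ⟨j, hj, hje⟩ := Finset.mem_image.1 hmem
    have : j = i := γ.injective hje
    subst this
    exact absurd (Finset.mem_Ioi.1 hj) (lt_irrefl _)
  refine ⟨i, ⟨hi, hlt⟩, ?_, ?_, ?_⟩
  · exact ⟨γ ⟨(i:ℕ)+1, hi⟩, Finset.mem_image.2 ⟨_, Finset.mem_Ioi.2 hii', rfl⟩⟩
  · intro e
    exact hnotmem (e ▸ Finset.mem_univ _)
  · exact ⟨γ ⟨(i:ℕ)+1, hi⟩, Finset.mem_image.2 ⟨_, Finset.mem_Ioi.2 hii', rfl⟩,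
      γ i, Finset.mem_compl.2 hnotmem, hlt⟩

theorem part3 {n : ℕ} (A : Finset (Fin n)) (hA : GoodSet A) :
    ∃! γ : Equiv.Perm (Fin n), JoinIrr γ ∧
      ∃ i : Fin n, IsDescent γ i ∧ A = Finset.image ⇑γ (Finset.Ioi i) := by
  classical
  obtain ⟨hne, hnu, a0, ha0, b0, hb0, hab0⟩ := hA
  set k := Aᶜ.card with hk
  have hcompl : A.card + Aᶜ.card = n := by
    rw [Finset.card_add_card_compl]; simp
  have hk0 : 0 < k := Finset.card_pos.2 (by
    rw [Finset.nonempty_iff_ne_empty]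
    intro e
    exact hnu ((Finset.compl_eq_empty_iff _).1 e))
  have hAcard : 0 < A.card := Finset.card_pos.2 hne
  have hkn : k < n := by omega
  set f : Fin n → Fin n := fun j =>
    if h : (j:ℕ) < k then Aᶜ.orderEmbOfFin hk.symm ⟨j, h⟩
    else A.orderEmbOfFin rfl ⟨(j:ℕ) - k, by have := j.isLt; omega⟩ with hfdef
  have hfval1 : ∀ (j : Fin n) (h : (j:ℕ) < k), f j = Aᶜ.orderEmbOfFin hk.symm ⟨j, h⟩ := by
    intro j h; rw [hfdef]; simp only []; rw [dif_pos h]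
  have hfval2 : ∀ (j : Fin n) (h : ¬ (j:ℕ) < k),
      f j = A.orderEmbOfFin rfl ⟨(j:ℕ) - k, by have := j.isLt; omega⟩ := by
    intro j h; rw [hfdef]; simp only []; rw [dif_neg h]
  have hmem1 : ∀ (j : Fin n), (j:ℕ) < k → f j ∈ Aᶜ := by
    intro j h; rw [hfval1 j h]; exact Finset.orderEmbOfFin_mem _ _ _
  have hmem2 : ∀ (j : Fin n), ¬ (j:ℕ) < k → f j ∈ A := by
    intro j h; rw [hfval2 j h]; exact Finset.orderEmbOfFin_mem _ _ _
  have hfinj : Function.Injective f := by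
    intro x y hxy
    by_cases hx : (x:ℕ) < k <;> by_cases hy : (y:ℕ) < k
    · rw [hfval1 x hx, hfval1 y hy] at hxy
      have := (Aᶜ.orderEmbOfFin hk.symm).injective hxy
      have := congrArg Fin.val this
      exact Fin.ext this
    · exfalso
      have h1 := hmem1 x hx
      have h2 := hmem2 y hy
      rw [hxy] at h1
      exact (Finset.mem_compl.1 h1) h2
    · exfalso
      have h1 := hmem2 x hx
      have h2 := hmem1 y hy
      rw [hxy] at h1
      exact (Finset.mem_compl.1 h2) h1
    · rw [hfval2 x hx, hfval2 y hy] at hxy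
      have := (A.orderEmbOfFin rfl).injective hxy
      have := congrArg Fin.val this
      simp only [] at this
      have hx' := x.isLt
      have hy' := y.isLt
      exact Fin.ext (by omega)
  set γ : Equiv.Perm (Fin n) :=
    Equiv.ofBijective f (Finite.injective_iff_bijective.1 hfinj) with hγdef
  have hγ : ∀ j, γ j = f j := fun _ => rfl
  set i : Fin n := ⟨k - 1, by omega⟩ with hidef
  have hival : (i:ℕ) = k - 1 := rfl
  have hik : (i:ℕ) + 1 = k := by omega
  have hin : (i:ℕ) + 1 < n := by omega
  -- min of A, max of Aᶜ
  have hminA : ∀ x ∈ A, A.orderEmbOfFin rfl ⟨0, hAcard⟩ ≤ x := by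
    intro x hx
    have : x ∈ Set.range (A.orderEmbOfFin rfl) := by
      rw [Finset.range_orderEmbOfFin]; exact hx
    obtain ⟨m, rfl⟩ := this
    exact (A.orderEmbOfFin rfl).monotone (by exact Fin.mk_le_of_le_val (Nat.zero_le _))
  have hmaxAc : ∀ x ∈ Aᶜ, x ≤ Aᶜ.orderEmbOfFin hk.symm ⟨k-1, by omega⟩ := by
    intro x hx
    have : x ∈ Set.range (Aᶜ.orderEmbOfFin hk.symm) := by
      rw [Finset.range_orderEmbOfFin]; exact hx
    obtain ⟨m, rfl⟩ := this
    refine (Aᶜ.orderEmbOfFin hk.symm).monotone ?_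
    have := m.isLt
    exact Fin.mk_le_mk.2 (by omega) |>.trans_eq rfl |>.trans_eq rfl
  have hdesc : IsDescent γ i := by
    refine ⟨hin, ?_⟩
    have e1 : γ ⟨(i:ℕ)+1, hin⟩ = A.orderEmbOfFin rfl ⟨0, hAcard⟩ := by
      rw [hγ, hfval2 _ (by simp only [Fin.val_mk]; omega)]
      congr 1
      exact Fin.ext (by simp only [Fin.val_mk]; omega)
    have e2 : γ i = Aᶜ.orderEmbOfFin hk.symm ⟨k-1, by omega⟩ := by
      rw [hγ, hfval1 _ (by omega)]
    rw [e1, e2]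
    calc A.orderEmbOfFin rfl ⟨0, hAcard⟩ ≤ a0 := hminA a0 ha0
      _ < b0 := hab0
      _ ≤ _ := hmaxAc b0 hb0
  have huniq : ∀ j, IsDescent γ j → j = i := by
    rintro j ⟨hj, hdj⟩
    by_contra hji
    have hjv : (j:ℕ) ≠ k - 1 := fun e => hji (Fin.ext (e.trans hival.symm))
    by_cases hc1 : (j:ℕ) + 1 < k
    · have h1 : γ j < γ ⟨(j:ℕ)+1, hj⟩ := by
        rw [hγ, hγ, hfval1 j (by omega), hfval1 _ (by show (j:ℕ)+1 < k; omega)]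
        exact (Aᶜ.orderEmbOfFin hk.symm).strictMono (Fin.mk_lt_mk.2 (by show (j:ℕ) < (j:ℕ)+1; omega))
      exact absurd hdj (asymm h1)
    · by_cases hc2 : (j:ℕ) < k
      · exact hjv (by omega)
      · have h1 : γ j < γ ⟨(j:ℕ)+1, hj⟩ := by
          rw [hγ, hγ, hfval2 j hc2, hfval2 _ (by show ¬ ((j:ℕ)+1 < k); omega)]
          exact (A.orderEmbOfFin rfl).strictMono (Fin.mk_lt_mk.2 (by show (j:ℕ) - k < (j:ℕ)+1 - k; omega))
        exact absurd hdj (asymm h1)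
  have hJoin : JoinIrr γ := (joinIrr_iff γ).2 ⟨i, hdesc, huniq⟩
  have himage : A = Finset.image ⇑γ (Finset.Ioi i) := by
    ext x
    constructor
    · intro hx
      have : x ∈ Set.range (A.orderEmbOfFin rfl) := by
        rw [Finset.range_orderEmbOfFin]; exact hx
      obtain ⟨m, rfl⟩ := this
      have hmlt := m.isLt
      refine Finset.mem_image.2 ⟨⟨k + m, by omega⟩, ?_, ?_⟩
      · refine Finset.mem_Ioi.2 ?_
        rw [Fin.lt_def]
        simp only [Fin.val_mk, hival]
        omega
      · rw [hγ, hfval2 _ (by simp only [Fin.val_mk]; omega)]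
        congr 1
        exact Fin.ext (by simp only [Fin.val_mk]; omega)
    · intro hx
      obtain ⟨j, hj, rfl⟩ := Finset.mem_image.1 hx
      have hij : i < j := Finset.mem_Ioi.1 hj
      have : k ≤ (j:ℕ) := by
        have := Fin.lt_def.1 hij
        omega
      rw [hγ]
      exact hmem2 j (by omega)
  refine ⟨γ, ⟨hJoin, i, hdesc, himage⟩, ?_⟩
  -- uniqueness
  rintro γ' ⟨hJ', i'', hd'', him''⟩
  obtain ⟨hi'', hdlt''⟩ := hd''
  -- i'' = i
  have hcard2 : A.card = n - 1 - (i'':ℕ) := by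
    rw [him'', Finset.card_image_of_injective _ γ'.injective, Fin.card_Ioi]
  have hii : (i'':ℕ) = k - 1 := by
    have := i''.isLt
    omega
  -- all descents of γ' are at i''
  obtain ⟨i0, hd0, hu0⟩ := (joinIrr_iff γ').1 hJ'
  have hnd' : ∀ j, IsDescent γ' j → (j:ℕ) = k - 1 := by
    intro j hj
    have e1 := hu0 j hj
    have e2 := hu0 i'' ⟨hi'', hdlt''⟩
    have e3 : j = i'' := e1.trans e2.symm
    exact (congrArg Fin.val e3).trans hii
  have hval2' : ∀ j : Fin n, k ≤ (j:ℕ) → γ' j ∈ A := by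
    intro j hjk
    rw [him'']
    refine Finset.mem_image.2 ⟨j, Finset.mem_Ioi.2 ?_, rfl⟩
    rw [Fin.lt_def, hii]
    omega
  have hval1' : ∀ j : Fin n, (j:ℕ) < k → γ' j ∈ Aᶜ := by
    intro j hjk
    rw [Finset.mem_compl]
    intro hmem
    rw [him''] at hmem
    obtain ⟨j2, hj2, he⟩ := Finset.mem_image.1 hmem
    have : j2 = j := γ'.injective he
    subst this
    have := Fin.lt_def.1 (Finset.mem_Ioi.1 hj2)
    rw [hii] at this
    omega
  -- strict increase away from k-1
  have hstep : ∀ (m : ℕ) (hm1 : m + 1 < n), m ≠ k - 1 →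
      ¬ (γ' ⟨m+1, hm1⟩ < γ' ⟨m, by omega⟩) := by
    intro m hm1 hmne hlt
    exact hmne (hnd' ⟨m, by omega⟩ ⟨hm1, hlt⟩)
  -- first piece
  have hg : ∀ (m : ℕ) (hm : m < k), γ' ⟨m, by omega⟩ = Aᶜ.orderEmbOfFin hk.symm ⟨m, hm⟩ := by
    have hgmono : StrictMono (fun m : Fin k => γ' ⟨(m:ℕ), by have := m.isLt; omega⟩) := by
      intro m1 m2 hlt
      have h1 : (m1:ℕ) < (m2:ℕ) := hlt
      have h2 := m2.isLt
      exact incr_of_not_descent γ' h1 (by omega)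
        (fun m hm1 hma hmb => hstep m hm1 (by omega))
    have hgmem : ∀ m : Fin k, γ' ⟨(m:ℕ), by have := m.isLt; omega⟩ ∈ Aᶜ :=
      fun m => hval1' _ m.isLt
    have := Finset.orderEmbOfFin_unique hk.symm hgmem hgmono
    intro m hm
    have := congrFun this ⟨m, hm⟩
    simpa using this
  -- second piece
  have hg2 : ∀ (m : ℕ) (hm : m < A.card),
      γ' ⟨k + m, by omega⟩ = A.orderEmbOfFin rfl ⟨m, hm⟩ := by
    have hgmono : StrictMono (fun m : Fin A.card =>
        γ' ⟨k + (m:ℕ), by have := m.isLt; omega⟩) := by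
      intro m1 m2 hlt
      have h1 : (m1:ℕ) < (m2:ℕ) := hlt
      have h2 := m2.isLt
      exact incr_of_not_descent γ' (by omega) (by omega)
        (fun m hm1 hma hmb => hstep m hm1 (by omega))
    have hgmem : ∀ m : Fin A.card, γ' ⟨k + (m:ℕ), by have := m.isLt; omega⟩ ∈ A :=
      fun m => hval2' _ (by simp only [Fin.val_mk]; omega)
    have := Finset.orderEmbOfFin_unique rfl hgmem hgmono
    intro m hm
    have := congrFun this ⟨m, hm⟩
    simpa using this
  -- conclude
  apply Equiv.ext
  intro j
  by_cases hj : (j:ℕ) < k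
  · have e1 : γ' j = Aᶜ.orderEmbOfFin hk.symm ⟨j, hj⟩ := by
      have := hg j hj
      have hje : (⟨(j:ℕ), by omega⟩ : Fin n) = j := Fin.ext rfl
      rwa [hje] at this
    rw [e1, hγ, hfval1 j hj]
  · have hjlt := j.isLt
    have hm : (j:ℕ) - k < A.card := by omega
    have e1 : γ' j = A.orderEmbOfFin rfl ⟨(j:ℕ) - k, hm⟩ := by
      have := hg2 ((j:ℕ) - k) hm
      have hje : (⟨k + ((j:ℕ) - k), by omega⟩ : Fin n) = j := Fin.ext (by simp; omega)
      rwa [hje] at this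
    rw [e1, hγ, hfval2 j hj]

/-- A permutation `γ ∈ S_n` is join-irreducible in the right weak order
iff it has exactly one descent; moreover `γ ↦ A = {γ_{i+1}, …, γ_n}` (values after the
unique descent) is a bijection between join-irreducibles of `S_n` and nonempty proper
subsets `A ⊆ [n]` with `max(Aᶜ) > min(A)`. -/
theorem stmt_12 {n : ℕ} :
    (∀ γ : Equiv.Perm (Fin n), JoinIrr γ ↔ ∃! i : Fin n, IsDescent γ i) ∧
    (∀ γ : Equiv.Perm (Fin n), JoinIrr γ →
      ∃ i : Fin n, IsDescent γ i ∧ GoodSet (Finset.image ⇑γ (Finset.Ioi i))) ∧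
    (∀ A : Finset (Fin n), GoodSet A →
      ∃! γ : Equiv.Perm (Fin n), JoinIrr γ ∧
        ∃ i : Fin n, IsDescent γ i ∧ A = Finset.image ⇑γ (Finset.Ioi i)) := by
  exact ⟨fun γ => joinIrr_iff γ, fun γ h => part2 γ h, fun A hA => part3 A hA⟩
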